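/- arXiv:1612.04347 — 2 statements merged into one kernel-verified Lean document; each statement's English description precedes it below -/
import Mathlib

section
/- Let d ≥ 1, let p ≥ 1 be a real number, let M be a real symmetric positive definite d×d matrix satisfying m·I ≼ M ≼ m̄·I in the Loewner order for constants 0 < m ≤ m̄, and let γ ≥ 0. Then for every real d×d matrix J, √(det M) · ‖J M⁻¹ Jᵀ − γ·I‖_F^{2p} ≥ α · ‖J‖_F^{4p} − β, where α = 2^{1−2p} m^{d/2} / (m̄^{2p} d^{2p}) and β = m^{d/2} (γ² d)^p. (Coercivity of the integrand G(J, M) = √(det M) ‖J M⁻¹ Jᵀ − γI‖_F^{2p} of the new meshing functional.) -/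
open Matrix

/-- The Frobenius norm of a real `d × d` matrix. -/
noncomputable def frob {d : ℕ} (A : Matrix (Fin d) (Fin d) ℝ) : ℝ :=
  Real.sqrt (∑ i, ∑ j, (A i j) ^ 2)


open Matrix NNReal in
private lemma cs_psd {d : ℕ} {M : Matrix (Fin d) (Fin d) ℝ} (hM : M.PosSemidef)
    (x z : Fin d → ℝ) :
    (x ⬝ᵥ (M *ᵥ z)) ^ 2 ≤ (x ⬝ᵥ (M *ᵥ x)) * (z ⬝ᵥ (M *ᵥ z)) := by
  have hsymm : ∀ u w : Fin d → ℝ, u ⬝ᵥ (M *ᵥ w) = w ⬝ᵥ (M *ᵥ u) := by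
    intro u w
    rw [dotProduct_mulVec, dotProduct_comm, ← mulVec_transpose]
    congr 1
    rw [← conjTranspose_eq_transpose_of_trivial, hM.1.eq]
  have key : ∀ t : ℝ, 0 ≤ (z ⬝ᵥ (M *ᵥ z)) * (t * t)
      + (2 * (x ⬝ᵥ (M *ᵥ z))) * t + (x ⬝ᵥ (M *ᵥ x)) := by
    intro t
    have h0 := hM.dotProduct_mulVec_nonneg (x + t • z)
    simp only [star_trivial] at h0
    calc (0:ℝ) ≤ (x + t • z) ⬝ᵥ (M *ᵥ (x + t • z)) := h0
      _ = (z ⬝ᵥ (M *ᵥ z)) * (t * t) + (2 * (x ⬝ᵥ (M *ᵥ z))) * t + (x ⬝ᵥ (M *ᵥ x)) := by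
        rw [mulVec_add, mulVec_smul, add_dotProduct, dotProduct_add, dotProduct_add,
          smul_dotProduct, smul_dotProduct, dotProduct_smul, dotProduct_smul, hsymm z x]
        simp only [smul_eq_mul]; ring
  have hd := discrim_le_zero key
  simp only [discrim] at hd
  nlinarith [hd]

open Matrix NNReal in
private lemma inv_quad_lb {d : ℕ} {M : Matrix (Fin d) (Fin d) ℝ} (hM : M.PosDef)
    {mbar : ℝ} (hmb : 0 < mbar)
    (hhi : ∀ x : Fin d → ℝ, x ⬝ᵥ (M *ᵥ x) ≤ mbar * (x ⬝ᵥ x))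
    (x : Fin d → ℝ) : (x ⬝ᵥ x) / mbar ≤ x ⬝ᵥ (M⁻¹ *ᵥ x) := by
  have hinv : M * M⁻¹ = 1 := mul_nonsing_inv M hM.det_pos.ne'.isUnit
  set z := M⁻¹ *ᵥ x with hz
  have hMz : M *ᵥ z = x := by
    rw [hz, mulVec_mulVec, hinv, one_mulVec]
  have h1 : x ⬝ᵥ (M *ᵥ z) = x ⬝ᵥ x := by rw [hMz]
  have h2 : x ⬝ᵥ (M⁻¹ *ᵥ x) = z ⬝ᵥ (M *ᵥ z) := by
    rw [hMz, dotProduct_comm]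
  rcases eq_or_lt_of_le ((by simpa using dotProduct_star_self_nonneg x : (0:ℝ) ≤ x ⬝ᵥ x)) with h0 | h0
  · have hx0 : x = 0 := by
      ext i
      have := (dotProduct_self_eq_zero (v := x)).mp h0.symm
      simp [this]
    have : (0:ℝ) ≤ x ⬝ᵥ (M⁻¹ *ᵥ x) := by simp [hx0]
    simpa [hx0] using this
  · have hcs := cs_psd hM.posSemidef x z
    rw [h1] at hcs
    have hxx := hhi x
    have hzz : 0 ≤ z ⬝ᵥ (M *ᵥ z) := by
      have := hM.posSemidef.dotProduct_mulVec_nonneg z; simpa using this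
    rw [h2]
    rw [div_le_iff₀ hmb]
    nlinarith [hcs, hxx, h0]

open Matrix NNReal in
private lemma eig_lb {d : ℕ} {M : Matrix (Fin d) (Fin d) ℝ} (hM : M.PosDef)
    {m : ℝ}
    (hlo : ∀ x : Fin d → ℝ, m * (x ⬝ᵥ x) ≤ x ⬝ᵥ (M *ᵥ x))
    (i : Fin d) : m ≤ hM.1.eigenvalues i := by
  set v : Fin d → ℝ := ⇑(hM.1.eigenvectorBasis i) with hv
  have hvv : v ⬝ᵥ v = 1 := by
    have hnorm : ‖hM.1.eigenvectorBasis i‖ = 1 := hM.1.eigenvectorBasis.orthonormal.1 i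
    have : v ⬝ᵥ v = ‖hM.1.eigenvectorBasis i‖ ^ 2 := by
      rw [← real_inner_self_eq_norm_sq]
      rw [EuclideanSpace.inner_eq_star_dotProduct, star_trivial]
    rw [this, hnorm]; norm_num
  have hMv : M *ᵥ v = hM.1.eigenvalues i • v := hM.1.mulVec_eigenvectorBasis i
  have := hlo v
  rw [hMv, dotProduct_smul, smul_eq_mul, hvv] at this
  simpa using this

open Matrix NNReal in
private lemma det_lb {d : ℕ} {M : Matrix (Fin d) (Fin d) ℝ} (hM : M.PosDef)
    {m : ℝ} (hm : 0 < m)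
    (heig : ∀ i, m ≤ hM.1.eigenvalues i) :
    m ^ ((d : ℝ) / 2) ≤ Real.sqrt M.det := by
  have hdet : M.det = ∏ i, hM.1.eigenvalues i := by
    simpa using hM.1.det_eq_prod_eigenvalues
  have h1 : m ^ d ≤ M.det := by
    rw [hdet]
    calc m ^ d = ∏ _i : Fin d, m := by simp
      _ ≤ ∏ i, hM.1.eigenvalues i :=
        Finset.prod_le_prod (fun i _ => hm.le) (fun i _ => heig i)
  have h2 : Real.sqrt (m ^ d) ≤ Real.sqrt M.det := Real.sqrt_le_sqrt h1
  calc m ^ ((d : ℝ) / 2) = Real.sqrt (m ^ d) := by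
        rw [Real.sqrt_eq_rpow, ← Real.rpow_natCast m d, ← Real.rpow_mul hm.le]
        ring_nf
    _ ≤ _ := h2

attribute [local instance] Matrix.frobeniusSeminormedAddCommGroup

open Matrix NNReal in
private lemma frob_eq_norm {d : ℕ} (A : Matrix (Fin d) (Fin d) ℝ) : frob A = ‖A‖ := by
  rw [Matrix.frobenius_norm_def, frob, Real.sqrt_eq_rpow]
  norm_num [Real.norm_eq_abs, sq_abs]

open Matrix NNReal in
private lemma frob_nonneg {d : ℕ} (A : Matrix (Fin d) (Fin d) ℝ) : 0 ≤ frob A :=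
  Real.sqrt_nonneg _

open Matrix NNReal in
private lemma frob_sq {d : ℕ} (A : Matrix (Fin d) (Fin d) ℝ) :
    frob A ^ 2 = ∑ i, ∑ j, (A i j) ^ 2 :=
  Real.sq_sqrt (by positivity)

open Matrix NNReal in
private lemma frob_triangle {d : ℕ} (A B : Matrix (Fin d) (Fin d) ℝ) :
    frob A ≤ frob (A - B) + frob B := by
  rw [frob_eq_norm, frob_eq_norm, frob_eq_norm]
  calc ‖A‖ = ‖A - B + B‖ := by rw [sub_add_cancel]
    _ ≤ ‖A - B‖ + ‖B‖ := norm_add_le _ _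

open Matrix NNReal in
private lemma frob_smul_one {d : ℕ} (γ : ℝ) (hγ : 0 ≤ γ) :
    frob (γ • (1 : Matrix (Fin d) (Fin d) ℝ)) = γ * Real.sqrt d := by
  have : ∑ i, ∑ j, ((γ • (1 : Matrix (Fin d) (Fin d) ℝ)) i j) ^ 2 = d * γ ^ 2 := by
    simp [Matrix.smul_apply, Matrix.one_apply, apply_ite (· ^ 2 : ℝ → ℝ),
      Finset.sum_ite_eq', mul_comm]
  rw [frob, this, Real.sqrt_mul (by positivity), Real.sqrt_sq hγ, mul_comm]

open Matrix NNReal in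
private lemma diag_entry {d : ℕ} (J N : Matrix (Fin d) (Fin d) ℝ) (i : Fin d) :
    (J * N * Jᵀ) i i = (J i) ⬝ᵥ (N *ᵥ (J i)) := by
  simp only [Matrix.mul_apply, transpose_apply, dotProduct, mulVec, Finset.sum_mul,
    Finset.mul_sum]
  rw [Finset.sum_comm]
  apply Finset.sum_congr rfl; intro k _
  apply Finset.sum_congr rfl; intro l _
  ring

open Matrix NNReal in
private lemma trace_le_sqrt_frob {d : ℕ} (K : Matrix (Fin d) (Fin d) ℝ)
    (ht : 0 ≤ ∑ i, K i i) :
    ∑ i, K i i ≤ Real.sqrt d * frob K := by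
  have h1 : (∑ i, K i i) ^ 2 ≤ (d : ℝ) * ∑ i, (K i i) ^ 2 := by
    have := sq_sum_le_card_mul_sum_sq (s := Finset.univ) (f := fun i => K i i)
    simpa using this
  have h2 : ∑ i, (K i i) ^ 2 ≤ ∑ i, ∑ j, (K i j) ^ 2 := by
    apply Finset.sum_le_sum; intro i _
    exact Finset.single_le_sum (f := fun j => (K i j) ^ 2) (fun j _ => sq_nonneg _)
      (Finset.mem_univ i)
  have h3 : (∑ i, K i i) ^ 2 ≤ ((d : ℝ).sqrt * frob K) ^ 2 := by
    rw [mul_pow, frob_sq, Real.sq_sqrt (d.cast_nonneg)]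
    nlinarith
  have h4 : 0 ≤ Real.sqrt d * frob K := mul_nonneg (Real.sqrt_nonneg _) (frob_nonneg _)
  nlinarith

open Matrix NNReal in
private lemma real_rpow_add_le (x y : ℝ) (hx : 0 ≤ x) (hy : 0 ≤ y) {q : ℝ} (hq : 1 ≤ q) :
    (x + y) ^ q ≤ 2 ^ (q - 1) * (x ^ q + y ^ q) := by
  have h := NNReal.rpow_add_le_mul_rpow_add_rpow x.toNNReal y.toNNReal hq
  have hc : ((x.toNNReal + y.toNNReal : ℝ≥0) : ℝ) = x + y := by
    simp [Real.coe_toNNReal _ hx, Real.coe_toNNReal _ hy]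
  calc (x + y) ^ q = (((x.toNNReal + y.toNNReal : ℝ≥0) : ℝ)) ^ q := by rw [hc]
    _ = (((x.toNNReal + y.toNNReal) ^ q : ℝ≥0) : ℝ) := by rw [NNReal.coe_rpow]
    _ ≤ (((2 : ℝ≥0) ^ (q - 1) * (x.toNNReal ^ q + y.toNNReal ^ q) : ℝ≥0) : ℝ) := by
        exact_mod_cast h
    _ = 2 ^ (q - 1) * (x ^ q + y ^ q) := by
        push_cast [NNReal.coe_rpow, Real.coe_toNNReal _ hx, Real.coe_toNNReal _ hy]
        norm_num

open NNReal in
/-- Coercivity of the integrand `G(J, M) = √(det M) ‖J M⁻¹ Jᵀ − γI‖_F^{2p}`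
of the new meshing functional. -/
theorem stmt0 (d : ℕ) (hd : 1 ≤ d) (p : ℝ) (hp : 1 ≤ p)
    (M : Matrix (Fin d) (Fin d) ℝ) (hM : M.PosDef)
    (m mbar : ℝ) (hm : 0 < m) (hmm : m ≤ mbar)
    (hlo : ∀ x : Fin d → ℝ, m * (x ⬝ᵥ x) ≤ x ⬝ᵥ (M *ᵥ x))
    (hhi : ∀ x : Fin d → ℝ, x ⬝ᵥ (M *ᵥ x) ≤ mbar * (x ⬝ᵥ x))
    (γ : ℝ) (hγ : 0 ≤ γ) (J : Matrix (Fin d) (Fin d) ℝ) :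
    Real.sqrt M.det * frob (J * M⁻¹ * Jᵀ - γ • 1) ^ (2 * p) ≥
      (2 : ℝ) ^ (1 - 2 * p) * m ^ ((d : ℝ) / 2) / (mbar ^ (2 * p) * (d : ℝ) ^ (2 * p)) *
        frob J ^ (4 * p) - m ^ ((d : ℝ) / 2) * (γ ^ 2 * (d : ℝ)) ^ p := by
  have hmb : (0:ℝ) < mbar := lt_of_lt_of_le hm hmm
  have hd1 : (1:ℝ) ≤ (d:ℝ) := by exact_mod_cast hd
  have hd0 : (0:ℝ) < (d:ℝ) := lt_of_lt_of_le one_pos hd1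
  set q : ℝ := 2 * p with hqdef
  have hq : (1:ℝ) ≤ q := by simp only [hqdef]; linarith
  have hq0 : (0:ℝ) < q := lt_of_lt_of_le one_pos hq
  set K := J * M⁻¹ * Jᵀ with hK
  set a := frob (K - γ • 1) with ha
  have ha0 : 0 ≤ a := frob_nonneg _
  set sd := Real.sqrt d with hsd
  have hsd0 : (0:ℝ) < sd := Real.sqrt_pos.mpr hd0
  set c := γ * sd with hc
  have hc0 : 0 ≤ c := mul_nonneg hγ hsd0.le
  set F := frob J with hF
  have hF0 : 0 ≤ F := frob_nonneg _
  set md := m ^ ((d:ℝ)/2) with hmd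
  have hmd0 : 0 ≤ md := Real.rpow_nonneg hm.le _
  -- trace bounds
  have h_t_lb : F ^ 2 / mbar ≤ ∑ i, K i i := by
    have h1 : ∀ i, (J i ⬝ᵥ J i) / mbar ≤ K i i := by
      intro i
      rw [hK, diag_entry]
      exact inv_quad_lb hM hmb hhi (J i)
    have h2 : F ^ 2 = ∑ i, J i ⬝ᵥ J i := by
      rw [hF, frob_sq]
      apply Finset.sum_congr rfl; intro i _
      simp [dotProduct, sq]
    rw [h2, Finset.sum_div]
    exact Finset.sum_le_sum fun i _ => h1 i
  have h_t0 : 0 ≤ ∑ i, K i i := le_trans (by positivity) h_t_lb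
  have h_t_ub := trace_le_sqrt_frob K h_t0
  have hfK0 : 0 ≤ frob K := frob_nonneg _
  have h_s : F ^ 2 / (mbar * sd) ≤ a + c := by
    have h1 : F ^ 2 / (mbar * sd) ≤ frob K := by
      rw [div_le_iff₀ (by positivity)]
      have := le_trans h_t_lb h_t_ub
      rw [div_le_iff₀ hmb] at this
      calc F ^ 2 ≤ sd * frob K * mbar := this
        _ = frob K * (mbar * sd) := by ring
    calc F ^ 2 / (mbar * sd) ≤ frob K := h1
      _ ≤ a + c := by
          rw [ha, hc, ← frob_smul_one γ hγ (d := d)]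
          exact frob_triangle K (γ • 1)
  -- rpow chain
  set s := F ^ 2 / (mbar * sd) with hs
  have hs0 : 0 ≤ s := by positivity
  have hstep1 : s ^ q ≤ 2 ^ (q - 1) * (a ^ q + c ^ q) :=
    le_trans (Real.rpow_le_rpow hs0 h_s hq0.le) (real_rpow_add_le a c ha0 hc0 hq)
  have hstep2 : 2 ^ (1 - q) * s ^ q - c ^ q ≤ a ^ q := by
    have h2q : (2:ℝ) ^ (1 - q) * 2 ^ (q - 1) = 1 := by
      rw [← Real.rpow_add two_pos]; norm_num
    have := mul_le_mul_of_nonneg_left hstep1 (Real.rpow_nonneg (by norm_num : (0:ℝ) ≤ 2) (1 - q))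
    rw [← mul_assoc, h2q, one_mul] at this
    linarith
  -- identities
  have hE1 : c ^ q = (γ ^ 2 * (d:ℝ)) ^ p := by
    have hcsq : c ^ (2:ℕ) = γ ^ 2 * (d:ℝ) := by
      rw [hc, mul_pow, hsd, Real.sq_sqrt hd0.le]
    rw [hqdef, Real.rpow_mul hc0, show ((2:ℝ)) = ((2:ℕ):ℝ) by norm_num,
      Real.rpow_natCast, hcsq]
  have hE2 : s ^ q = F ^ (4 * p) / (mbar ^ q * (d:ℝ) ^ (q / 2)) := by
    have hFq : (F ^ 2) ^ q = F ^ (4 * p) := by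
      rw [show (F ^ 2 : ℝ) = F ^ ((2:ℕ):ℝ) by rw [Real.rpow_natCast],
        ← Real.rpow_mul hF0, show ((2:ℕ):ℝ) * q = 4 * p by rw [hqdef]; push_cast; ring]
    have hsdq : sd ^ q = (d:ℝ) ^ (q / 2) := by
      rw [hsd, Real.sqrt_eq_rpow, ← Real.rpow_mul hd0.le, one_div]
      ring_nf
    rw [hs, Real.div_rpow (by positivity) (by positivity), Real.mul_rpow hmb.le hsd0.le,
      hFq, hsdq]
  have hE3 : 2 ^ (1 - q) * md / (mbar ^ q * (d:ℝ) ^ q) * F ^ (4 * p) ≤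
      md * (2 ^ (1 - q) * s ^ q) := by
    rw [hE2]
    have hnum : (0:ℝ) ≤ 2 ^ (1 - q) * md * F ^ (4 * p) := by
      have := Real.rpow_nonneg hF0 (4 * p)
      have h2 : (0:ℝ) ≤ (2:ℝ) ^ (1 - q) := Real.rpow_nonneg (by norm_num) _
      positivity
    have hden1 : (0:ℝ) < mbar ^ q * (d:ℝ) ^ (q / 2) := by
      have := Real.rpow_pos_of_pos hmb q
      have := Real.rpow_pos_of_pos hd0 (q / 2)
      positivity
    have hden2 : mbar ^ q * (d:ℝ) ^ (q / 2) ≤ mbar ^ q * (d:ℝ) ^ q := by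
      have h1 := Real.rpow_le_rpow_of_exponent_le hd1 (by linarith : q / 2 ≤ q)
      have h2 : (0:ℝ) ≤ mbar ^ q := (Real.rpow_pos_of_pos hmb q).le
      exact mul_le_mul_of_nonneg_left h1 h2
    calc 2 ^ (1 - q) * md / (mbar ^ q * (d:ℝ) ^ q) * F ^ (4 * p)
        = (2 ^ (1 - q) * md * F ^ (4 * p)) / (mbar ^ q * (d:ℝ) ^ q) := by ring
      _ ≤ (2 ^ (1 - q) * md * F ^ (4 * p)) / (mbar ^ q * (d:ℝ) ^ (q / 2)) :=
          div_le_div_of_nonneg_left hnum hden1 hden2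
      _ = md * (2 ^ (1 - q) * (F ^ (4 * p) / (mbar ^ q * (d:ℝ) ^ (q / 2)))) := by ring
  -- final assembly
  have hdet := det_lb hM hm (fun i => eig_lb hM hlo i)
  have haq0 : 0 ≤ a ^ q := Real.rpow_nonneg ha0 _
  have h1 : md * a ^ q ≤ Real.sqrt M.det * a ^ q := mul_le_mul_of_nonneg_right hdet haq0
  have h3 : md * (2 ^ (1 - q) * s ^ q) - md * c ^ q ≤ md * a ^ q := by
    have := mul_le_mul_of_nonneg_left hstep2 hmd0
    linarith [this, mul_sub md (2 ^ (1 - q) * s ^ q) (c ^ q)]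
  rw [ge_iff_le, ← hE1]
  linarith [h1, h3, hE3]
end

section
/- Let d ≥ 1, let p ≥ 1 be a real number, let θ ∈ (0, 1/2], and let M be a real symmetric positive definite d×d matrix satisfying m·I ≼ M ≼ m̄·I for constants 0 < m ≤ m̄. Then for every real d×d matrix J with det J > 0, θ·√(det M)·(tr(J M⁻¹ Jᵀ))^{dp/2} + (1 − 2θ)·d^{dp/2}·√(det M)·(det J / √(det M))^p ≥ θ · m^{d/2} · m̄^{−dp/2} · ‖J‖_F^{dp}. (Coercivity of the integrand of the existing meshing functional.) -/
open Matrix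

/-- Cauchy–Schwarz inequality for the bilinear form of a positive definite matrix. -/
theorem stmt11_cs (d : ℕ) (M : Matrix (Fin d) (Fin d) ℝ) (hM : M.PosDef)
    (x y : Fin d → ℝ) :
    (x ⬝ᵥ (M *ᵥ y)) ^ 2 ≤ (x ⬝ᵥ (M *ᵥ x)) * (y ⬝ᵥ (M *ᵥ y)) := by
  have hMT : Mᵀ = M := by
    have := hM.isHermitian.eq
    simpa using this
  have hsym : ∀ u v : Fin d → ℝ, u ⬝ᵥ (M *ᵥ v) = v ⬝ᵥ (M *ᵥ u) := by
    intro u v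
    rw [Matrix.dotProduct_mulVec, ← Matrix.mulVec_transpose, hMT, dotProduct_comm]
  have hq : ∀ t : ℝ, 0 ≤ (y ⬝ᵥ (M *ᵥ y)) * (t * t) + (2 * (x ⬝ᵥ (M *ᵥ y))) * t
      + (x ⬝ᵥ (M *ᵥ x)) := by
    intro t
    have h0 : 0 ≤ (x + t • y) ⬝ᵥ (M *ᵥ (x + t • y)) := by
      have := hM.posSemidef.dotProduct_mulVec_nonneg (x + t • y)
      simpa using this
    have hexp : (x + t • y) ⬝ᵥ (M *ᵥ (x + t • y)) =
        (y ⬝ᵥ (M *ᵥ y)) * (t * t) + (2 * (x ⬝ᵥ (M *ᵥ y))) * t + (x ⬝ᵥ (M *ᵥ x)) := by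
      rw [Matrix.mulVec_add, Matrix.mulVec_smul, add_dotProduct,
        smul_dotProduct, dotProduct_add, dotProduct_add,
        dotProduct_smul, dotProduct_smul, hsym y x]
      simp only [smul_eq_mul]; ring
    linarith [hexp ▸ h0]
  have hd := discrim_le_zero hq
  rw [discrim] at hd
  nlinarith [hd]

/-- The quadratic form of `M⁻¹` is bounded below when that of `M` is bounded above. -/
theorem stmt11_invq (d : ℕ) (M : Matrix (Fin d) (Fin d) ℝ) (hM : M.PosDef)
    (mbar : ℝ) (hmbar : 0 < mbar)
    (hhi : ∀ x : Fin d → ℝ, x ⬝ᵥ (M *ᵥ x) ≤ mbar * (x ⬝ᵥ x))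
    (x : Fin d → ℝ) : x ⬝ᵥ x ≤ mbar * (x ⬝ᵥ (M⁻¹ *ᵥ x)) := by
  set y := M⁻¹ *ᵥ x with hy
  have hMy : M *ᵥ y = x := by
    rw [hy, Matrix.mulVec_mulVec, Matrix.mul_nonsing_inv _ (isUnit_iff_ne_zero.2 hM.det_pos.ne'),
      Matrix.one_mulVec]
  have hyy : y ⬝ᵥ (M *ᵥ y) = x ⬝ᵥ (M⁻¹ *ᵥ x) := by
    rw [hMy, dotProduct_comm]
  have hxy : x ⬝ᵥ (M *ᵥ y) = x ⬝ᵥ x := by rw [hMy]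
  have h1 : (x ⬝ᵥ x) ^ 2 ≤ (x ⬝ᵥ (M *ᵥ x)) * (x ⬝ᵥ (M⁻¹ *ᵥ x)) := by
    have := stmt11_cs d M hM x y; rwa [hxy, hyy] at this
  have hinvnn : 0 ≤ x ⬝ᵥ (M⁻¹ *ᵥ x) := by
    rw [← hyy]; have := hM.posSemidef.dotProduct_mulVec_nonneg y; simpa using this
  have hxx : 0 ≤ x ⬝ᵥ x := Finset.sum_nonneg fun i _ => mul_self_nonneg _
  rcases eq_or_lt_of_le hxx with h0 | h0
  · have : x ⬝ᵥ x = 0 := h0.symm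
    rw [this]; positivity
  · have h2 : (x ⬝ᵥ x) ^ 2 ≤ (mbar * (x ⬝ᵥ x)) * (x ⬝ᵥ (M⁻¹ *ᵥ x)) :=
      h1.trans (mul_le_mul_of_nonneg_right (hhi x) hinvnn)
    nlinarith

/-- `tr (J A Jᵀ)` as a sum of quadratic forms of the rows of `J`. -/
theorem stmt11_tr_eq (d : ℕ) (A : Matrix (Fin d) (Fin d) ℝ) (J : Matrix (Fin d) (Fin d) ℝ) :
    (J * A * Jᵀ).trace = ∑ i, (fun j => J i j) ⬝ᵥ (A *ᵥ fun j => J i j) := by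
  simp only [Matrix.trace, Matrix.diag_apply, Matrix.mul_apply, Matrix.transpose_apply,
    dotProduct, Matrix.mulVec, dotProduct]
  refine Finset.sum_congr rfl fun i _ => ?_
  simp only [Finset.sum_mul, Finset.mul_sum]
  rw [Finset.sum_comm]
  refine Finset.sum_congr rfl fun j _ => Finset.sum_congr rfl fun k _ => ?_
  ring

/-- Lower bound for the determinant of a matrix with `M ≽ m I`. -/
theorem stmt11_detlb (d : ℕ) (M : Matrix (Fin d) (Fin d) ℝ) (hM : M.PosDef)
    (m : ℝ) (hm : 0 < m)
    (hlo : ∀ x : Fin d → ℝ, m * (x ⬝ᵥ x) ≤ x ⬝ᵥ (M *ᵥ x)) :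
    m ^ d ≤ M.det := by
  have hH := hM.isHermitian
  have hev : ∀ i, m ≤ hH.eigenvalues i := by
    intro i
    set v : Fin d → ℝ := ⇑(hH.eigenvectorBasis i) with hv
    have h1 : ‖hH.eigenvectorBasis i‖ = 1 := hH.eigenvectorBasis.orthonormal.1 i
    have hvv : v ⬝ᵥ v = 1 := by
      have h2 : (inner ℝ (hH.eigenvectorBasis i) (hH.eigenvectorBasis i) : ℝ) = 1 := by
        rw [real_inner_self_eq_norm_mul_norm, h1, mul_one]
      rw [EuclideanSpace.inner_eq_star_dotProduct] at h2
      simpa [dotProduct, hv, mul_comm] using h2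
    have h3 := hH.eigenvalues_eq i
    have h4 : hH.eigenvalues i = v ⬝ᵥ (M *ᵥ v) := by
      simpa [hv] using h3
    have := hlo v
    rw [hvv, mul_one] at this
    linarith [h4 ▸ this]
  have hdet : M.det = ∏ i, hH.eigenvalues i := by
    simpa using hH.det_eq_prod_eigenvalues
  rw [hdet]
  calc m ^ d = ∏ _i : Fin d, m := by simp
    _ ≤ ∏ i, hH.eigenvalues i :=
      Finset.prod_le_prod (fun i _ => hm.le) (fun i _ => hev i)

/-- Coercivity of the integrand of the existing meshing functional of Huang:
for `p ≥ 1`, `θ ∈ (0, 1/2]`, and `m I ≼ M ≼ m̄ I`,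
`θ √(det M) (tr(J M⁻¹ Jᵀ))^{dp/2} + (1−2θ) d^{dp/2} √(det M) (det J/√(det M))^p
  ≥ θ m^{d/2} m̄^{−dp/2} ‖J‖_F^{dp}`. -/
theorem stmt11 (d : ℕ) (hd : 1 ≤ d) (p : ℝ) (hp : 1 ≤ p)
    (θ : ℝ) (hθ0 : 0 < θ) (hθ : θ ≤ 1 / 2)
    (M : Matrix (Fin d) (Fin d) ℝ) (hM : M.PosDef)
    (m mbar : ℝ) (hm : 0 < m) (hmm : m ≤ mbar)
    (hlo : ∀ x : Fin d → ℝ, m * (x ⬝ᵥ x) ≤ x ⬝ᵥ (M *ᵥ x))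
    (hhi : ∀ x : Fin d → ℝ, x ⬝ᵥ (M *ᵥ x) ≤ mbar * (x ⬝ᵥ x))
    (J : Matrix (Fin d) (Fin d) ℝ) (hJ : 0 < J.det) :
    θ * Real.sqrt M.det * (J * M⁻¹ * Jᵀ).trace ^ ((d : ℝ) * p / 2)
        + (1 - 2 * θ) * (d : ℝ) ^ ((d : ℝ) * p / 2) * Real.sqrt M.det *
            (J.det / Real.sqrt M.det) ^ p ≥
      θ * m ^ ((d : ℝ) / 2) * mbar ^ (-((d : ℝ) * p) / 2) * frob J ^ ((d : ℝ) * p) := by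
  have hmbar : 0 < mbar := lt_of_lt_of_le hm hmm
  have hdM : 0 < M.det := hM.det_pos
  have hsM : 0 < Real.sqrt M.det := Real.sqrt_pos.2 hdM
  set F2 : ℝ := ∑ i, ∑ j, (J i j) ^ 2 with hF2def
  have hF2 : 0 ≤ F2 := by positivity
  set e : ℝ := (d : ℝ) * p / 2 with he
  have he0 : 0 ≤ e := by
    have : (0:ℝ) ≤ (d : ℝ) := Nat.cast_nonneg d
    have hp0 : (0:ℝ) ≤ p := le_trans zero_le_one hp
    positivity
  -- frob J ^ (d p) = F2 ^ e
  have hfrob : frob J ^ ((d : ℝ) * p) = F2 ^ e := by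
    rw [frob, ← hF2def, Real.sqrt_eq_rpow, ← Real.rpow_mul hF2]
    congr 1
    rw [he]; ring
  -- trace lower bound
  have htr : F2 / mbar ≤ (J * M⁻¹ * Jᵀ).trace := by
    have hF2eq : F2 = ∑ i, (fun j => J i j) ⬝ᵥ (fun j => J i j) := by
      rw [hF2def]
      refine Finset.sum_congr rfl fun i _ => ?_
      simp [dotProduct, sq]
    rw [stmt11_tr_eq, div_le_iff₀ hmbar, Finset.sum_mul, hF2eq]
    exact Finset.sum_le_sum fun i _ => by
      rw [mul_comm]
      exact stmt11_invq d M hM mbar hmbar hhi (fun j => J i j)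
  have htrnn : 0 ≤ F2 / mbar := div_nonneg hF2 hmbar.le
  have htrp : F2 ^ e / mbar ^ e ≤ (J * M⁻¹ * Jᵀ).trace ^ e := by
    have h := Real.rpow_le_rpow htrnn htr he0
    rwa [Real.div_rpow hF2 hmbar.le] at h
  -- determinant lower bound
  have hsqrt : m ^ ((d : ℝ) / 2) ≤ Real.sqrt M.det := by
    have h1 : m ^ ((d : ℝ) / 2) = Real.sqrt (m ^ d) := by
      rw [Real.sqrt_eq_rpow, ← Real.rpow_natCast m d, ← Real.rpow_mul hm.le]
      congr 1; ring
    rw [h1]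
    exact Real.sqrt_le_sqrt (stmt11_detlb d M hM m hm hlo)
  -- second term is nonnegative
  have h2θ : 0 ≤ 1 - 2 * θ := by linarith
  have hterm2 : 0 ≤ (1 - 2 * θ) * (d : ℝ) ^ ((d : ℝ) * p / 2) * Real.sqrt M.det *
      (J.det / Real.sqrt M.det) ^ p := by
    have h3 : (0:ℝ) ≤ (d : ℝ) ^ ((d : ℝ) * p / 2) := Real.rpow_nonneg (Nat.cast_nonneg d) _
    have h4 : (0:ℝ) ≤ (J.det / Real.sqrt M.det) ^ p :=
      Real.rpow_nonneg (div_nonneg hJ.le hsM.le) _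
    exact mul_nonneg (mul_nonneg (mul_nonneg h2θ h3) hsM.le) h4
  rw [ge_iff_le]
  calc θ * m ^ ((d : ℝ) / 2) * mbar ^ (-((d : ℝ) * p) / 2) * frob J ^ ((d : ℝ) * p)
      = θ * m ^ ((d : ℝ) / 2) * (F2 ^ e / mbar ^ e) := by
        rw [hfrob, show -((d : ℝ) * p) / 2 = -e by rw [he]; ring,
          Real.rpow_neg hmbar.le]
        ring
    _ ≤ θ * Real.sqrt M.det * (F2 ^ e / mbar ^ e) := by
        have hX : 0 ≤ F2 ^ e / mbar ^ e :=
          div_nonneg (Real.rpow_nonneg hF2 _) (Real.rpow_nonneg hmbar.le _)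
        have := mul_le_mul_of_nonneg_right
          (mul_le_mul_of_nonneg_left hsqrt hθ0.le) hX
        linarith
    _ ≤ θ * Real.sqrt M.det * (J * M⁻¹ * Jᵀ).trace ^ e := by
        have := mul_le_mul_of_nonneg_left htrp (mul_nonneg hθ0.le hsM.le)
        linarith [this]
    _ ≤ θ * Real.sqrt M.det * (J * M⁻¹ * Jᵀ).trace ^ ((d : ℝ) * p / 2)
          + (1 - 2 * θ) * (d : ℝ) ^ ((d : ℝ) * p / 2) * Real.sqrt M.det *
              (J.det / Real.sqrt M.det) ^ p := by
        rw [← he]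
        linarith [hterm2]
end
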